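/- Let C be a category, T, T° : C → C functors with an adjunction (η, ε) : T° ⊣ T, and p : T ⇒ Id_C a natural transformation; define p°_A := p_{T°(A)}∘η_A : A → T°(A). Fix n ≥ 1. Suppose given a functor Tₙ : C → C together with natural transformations q_j : Tₙ ⇒ T (1 ≤ j ≤ n) such that for every object A the cone ((Tₙ)(A); (q_j)_A) is a limiting wide pullback of n copies of p_A : T(A) → A, and a functor T°ₙ : C → C together with natural transformations q°_j : T° ⇒ T°ₙ (1 ≤ j ≤ n) such that for every A the cocone ((T°ₙ)(A); (q°_j)_A) is a colimiting wide pushout of n copies of p°_A : A → T°(A). Then T°ₙ is left adjoint to Tₙ; more precisely, the morphisms η(n)_A : A → Tₙ(T°ₙ(A)) uniquely determined by q_j∘η(n)_A = T(q°_j)∘η_A for all j (which exist because the maps T(q°_j)∘η_A have a common composite with p_{T°ₙ(A)}), and ε(n)_A : T°ₙ(Tₙ(A)) → A uniquely determined by ε(n)_A∘q°_j = ε_A∘T°(q_j) for all j, are the unit and counit of an adjunction (η(n), ε(n)) : T°ₙ ⊣ Tₙ. -/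
import Mathlib


open CategoryTheory

universe v u

/-- Frankland's lemma: if `T° ⊣ T`, `Tₙ(A)` is the wide pullback of `n` copies of
`p_A : T(A) ⟶ A`, and `T°ₙ(A)` is the wide pushout of `n` copies of
`p°_A := p_{T°(A)} ∘ η_A : A ⟶ T°(A)`, then `T°ₙ ⊣ Tₙ`, with unit determined by
`q_j ∘ η(n)_A = T(q°_j) ∘ η_A` and counit determined by `ε(n)_A ∘ q°_j = ε_A ∘ T°(q_j)`. -/
theorem wide_pullback_pushout_adjunction {C : Type u} [Category.{v} C]
    (T' T : C ⥤ C) (adj : T' ⊣ T) (p : T ⟶ 𝟭 C)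
    (n : ℕ) (hn : 1 ≤ n)
    (Tn : C ⥤ C) (q : Fin n → (Tn ⟶ T))
    -- `(Tₙ(A); (q_j)_A)` is a cone over `n` copies of `p_A`
    (hcone : ∀ (A : C) (i j : Fin n), (q i).app A ≫ p.app A = (q j).app A ≫ p.app A)
    -- ... and it is a limiting one
    (hlim : ∀ (A X : C) (g : Fin n → (X ⟶ T.obj A)),
      (∀ i j, g i ≫ p.app A = g j ≫ p.app A) →
      ∃! h : X ⟶ Tn.obj A, ∀ i, h ≫ (q i).app A = g i)
    (T'n : C ⥤ C) (q' : Fin n → (T' ⟶ T'n))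
    -- `(T°ₙ(A); (q°_j)_A)` is a cocone under `n` copies of `p°_A`
    (hcocone : ∀ (A : C) (i j : Fin n),
      (adj.unit.app A ≫ p.app (T'.obj A)) ≫ (q' i).app A =
        (adj.unit.app A ≫ p.app (T'.obj A)) ≫ (q' j).app A)
    -- ... and it is a colimiting one
    (hcolim : ∀ (A X : C) (g : Fin n → (T'.obj A ⟶ X)),
      (∀ i j, (adj.unit.app A ≫ p.app (T'.obj A)) ≫ g i =
        (adj.unit.app A ≫ p.app (T'.obj A)) ≫ g j) →
      ∃! h : T'n.obj A ⟶ X, ∀ i, (q' i).app A ≫ h = g i) :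
    ∃ adjn : T'n ⊣ Tn,
      (∀ (A : C) (i : Fin n),
        adjn.unit.app A ≫ (q i).app (T'n.obj A) = adj.unit.app A ≫ T.map ((q' i).app A)) ∧
      (∀ (A : C) (i : Fin n),
        (q' i).app (Tn.obj A) ≫ adjn.counit.app A =
          T'.map ((q i).app A) ≫ adj.counit.app A) := by
  -- key compatibility lemma
  have L1 : ∀ (A B : C) (f : T'.obj A ⟶ B),
      (adj.homEquiv A B f) ≫ p.app B = (adj.unit.app A ≫ p.app (T'.obj A)) ≫ f := by
    intro A B f
    rw [Adjunction.homEquiv_unit]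
    have := p.naturality f
    simp only [Functor.id_map] at this
    rw [Category.assoc, this, Category.assoc]
  have L2 : ∀ (A B : C) (k : A ⟶ T.obj B),
      (adj.unit.app A ≫ p.app (T'.obj A)) ≫ (adj.homEquiv A B).symm k = k ≫ p.app B := by
    intro A B k
    rw [← L1 A B _, Equiv.apply_symm_apply]
  choose lift hlift hliftu using hlim
  choose colift hcolift hcoliftu using hcolim
  have hFg : ∀ (A B : C) (h : T'n.obj A ⟶ B) (i j : Fin n),
      (adj.homEquiv A B ((q' i).app A ≫ h)) ≫ p.app B =
      (adj.homEquiv A B ((q' j).app A ≫ h)) ≫ p.app B := by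
    intro A B h i j
    rw [L1, L1, ← Category.assoc, ← Category.assoc, hcocone A i j]
  have hBg : ∀ (A B : C) (k : A ⟶ Tn.obj B) (i j : Fin n),
      (adj.unit.app A ≫ p.app (T'.obj A)) ≫ (adj.homEquiv A B).symm (k ≫ (q i).app B) =
      (adj.unit.app A ≫ p.app (T'.obj A)) ≫ (adj.homEquiv A B).symm (k ≫ (q j).app B) := by
    intro A B k i j
    rw [L2, L2, Category.assoc, Category.assoc, hcone B i j]
  let F : ∀ (A B : C), (T'n.obj A ⟶ B) → (A ⟶ Tn.obj B) := fun A B h =>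
    lift B A (fun i => adj.homEquiv A B ((q' i).app A ≫ h)) (hFg A B h)
  let G : ∀ (A B : C), (A ⟶ Tn.obj B) → (T'n.obj A ⟶ B) := fun A B k =>
    colift A B (fun i => (adj.homEquiv A B).symm (k ≫ (q i).app B)) (hBg A B k)
  have hF : ∀ (A B : C) (h : T'n.obj A ⟶ B) (i : Fin n),
      F A B h ≫ (q i).app B = adj.homEquiv A B ((q' i).app A ≫ h) :=
    fun A B h i => hlift B A _ (hFg A B h) i
  have hFu : ∀ (A B : C) (h : T'n.obj A ⟶ B) (y : A ⟶ Tn.obj B),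
      (∀ i, y ≫ (q i).app B = adj.homEquiv A B ((q' i).app A ≫ h)) → y = F A B h :=
    fun A B h y hy => hliftu B A _ (hFg A B h) y hy
  have hG : ∀ (A B : C) (k : A ⟶ Tn.obj B) (i : Fin n),
      (q' i).app A ≫ G A B k = (adj.homEquiv A B).symm (k ≫ (q i).app B) :=
    fun A B k i => hcolift A B _ (hBg A B k) i
  have hGu : ∀ (A B : C) (k : A ⟶ Tn.obj B) (y : T'n.obj A ⟶ B),
      (∀ i, (q' i).app A ≫ y = (adj.homEquiv A B).symm (k ≫ (q i).app B)) → y = G A B k :=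
    fun A B k y hy => hcoliftu A B _ (hBg A B k) y hy
  let core : Adjunction.CoreHomEquiv T'n Tn :=
    { homEquiv := fun A B =>
        { toFun := F A B
          invFun := G A B
          left_inv := fun h => by
            refine (hGu A B (F A B h) h (fun i => ?_)).symm
            rw [hF, Equiv.symm_apply_apply]
          right_inv := fun k => by
            refine (hFu A B (G A B k) k (fun i => ?_)).symm
            rw [hG, Equiv.apply_symm_apply] }
      homEquiv_naturality_left_symm := by
        intro A' A B f g
        show G A' B (f ≫ g) = T'n.map f ≫ G A B g
        refine (hGu A' B (f ≫ g) _ (fun i => ?_)).symm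
        rw [← Category.assoc, ← (q' i).naturality f, Category.assoc, hG,
          ← Adjunction.homEquiv_naturality_left_symm, Category.assoc]
      homEquiv_naturality_right := by
        intro A B B' f g
        show F A B' (f ≫ g) = F A B f ≫ Tn.map g
        refine (hFu A B' (f ≫ g) _ (fun i => ?_)).symm
        rw [Category.assoc, (q i).naturality g, ← Category.assoc, hF,
          ← Adjunction.homEquiv_naturality_right, Category.assoc] }
  refine ⟨Adjunction.mkOfHomEquiv core, ?_, ?_⟩
  · intro A i
    have hu : (Adjunction.mkOfHomEquiv core).unit.app A = F A (T'n.obj A) (𝟙 _) := rfl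
    have h2 := hF A (T'n.obj A) (𝟙 _) i
    rw [Category.comp_id] at h2
    rw [hu, h2, Adjunction.homEquiv_unit]
  · intro A i
    have hc : (Adjunction.mkOfHomEquiv core).counit.app A = G (Tn.obj A) A (𝟙 _) := rfl
    have h2 := hG (Tn.obj A) A (𝟙 _) i
    rw [Category.id_comp] at h2
    rw [hc, h2, Adjunction.homEquiv_counit]
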